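/- Let x_1,…,x_N and y_1,…,y_N be real values on a population of N ≥ 2 units, let s₁ be uniformly distributed over the n-element subsets of {1,…,N} with 2 ≤ n ≤ N, and let T_x, T_y, T_{xy} be square-integrable real random variables with E[T_x | s₁] = ∑_{j∈s₁} x_j, E[T_y | s₁] = ∑_{j∈s₁} y_j, and E[T_{xy} | s₁] = ∑_{j∈s₁} x_j y_j. Then the plug-in covariance estimator Ŝ_{xy} = (1/(n−1)) (T_{xy} − T_x T_y / n) satisfies E[Ŝ_{xy}] = S_{xy} − (1/(n(n−1))) E[Cov(T_x, T_y | s₁)]. -/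

import Mathlib

open MeasureTheory ProbabilityTheory Finset
open scoped ENNReal

/-- Finite sets carry the discrete (⊤) σ-algebra. -/
instance finsetMeasurableSpace (α : Type*) : MeasurableSpace (Finset α) := ⊤

/-- The conditional covariance of `X` and `Y` given the sub-σ-algebra `m`. -/
noncomputable def condCovFn {Ω : Type*} {m0 : MeasurableSpace Ω} (m : MeasurableSpace Ω)
    (μ : @MeasureTheory.Measure Ω m0) (X Y : Ω → ℝ) : Ω → ℝ :=
  μ[fun ω => (X ω - (μ[X|m]) ω) * (Y ω - (μ[Y|m]) ω) | m]

instance finsetMeasurableSingletonClass (α : Type*) : MeasurableSingletonClass (Finset α) :=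
  ⟨fun _ => trivial⟩


lemma count_mem {ι : Type*} [DecidableEq ι] (s : Finset ι) (n : ℕ) (hn : 1 ≤ n) {j : ι} (hj : j ∈ s) :
    ((s.powersetCard n).filter (fun t => j ∈ t)).card = (s.card - 1).choose (n - 1) := by
  rw [← Finset.card_erase_of_mem hj, ← Finset.card_powersetCard]
  refine Finset.card_nbij' (fun t => t.erase j) (fun u => insert j u) ?_ ?_ ?_ ?_
  · intro t ht
    simp only [Finset.mem_coe, mem_filter, Finset.mem_powersetCard] at ht
    obtain ⟨⟨hts, htc⟩, hjt⟩ := ht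
    rw [Finset.mem_coe, Finset.mem_powersetCard]
    exact ⟨Finset.erase_subset_erase _ hts, by rw [Finset.card_erase_of_mem hjt, htc]⟩
  · intro u hu
    rw [Finset.mem_coe, Finset.mem_powersetCard] at hu
    obtain ⟨hus, huc⟩ := hu
    have hju : j ∉ u := fun h => (Finset.notMem_erase j s) (hus h)
    simp only [Finset.mem_coe, mem_filter, Finset.mem_powersetCard]
    refine ⟨⟨?_, ?_⟩, Finset.mem_insert_self _ _⟩
    · exact Finset.insert_subset hj (hus.trans (Finset.erase_subset _ _))
    · rw [Finset.card_insert_of_notMem hju, huc]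
      omega
  · intro t ht
    simp only [Finset.mem_coe, mem_filter] at ht
    exact Finset.insert_erase ht.2
  · intro u hu
    rw [Finset.mem_coe, Finset.mem_powersetCard] at hu
    have hju : j ∉ u := fun h => (Finset.notMem_erase j s) (hu.1 h)
    exact Finset.erase_insert hju

lemma count_pair {ι : Type*} [DecidableEq ι] (s : Finset ι) (n : ℕ) (hn : 2 ≤ n) {j k : ι}
    (hj : j ∈ s) (hk : k ∈ s) (hjk : j ≠ k) :
    ((s.powersetCard n).filter (fun t => j ∈ t ∧ k ∈ t)).card = (s.card - 2).choose (n - 2) := by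
  have hscard : ((s.erase j).erase k).card = s.card - 2 := by
    rw [Finset.card_erase_of_mem (Finset.mem_erase.2 ⟨hjk.symm, hk⟩), Finset.card_erase_of_mem hj]
    omega
  rw [← hscard, ← Finset.card_powersetCard]
  refine Finset.card_nbij' (fun t => (t.erase j).erase k) (fun u => insert j (insert k u))
    ?_ ?_ ?_ ?_
  · intro t ht
    simp only [Finset.mem_coe, mem_filter, Finset.mem_powersetCard] at ht
    obtain ⟨⟨hts, htc⟩, hjt, hkt⟩ := ht
    rw [Finset.mem_coe, Finset.mem_powersetCard]
    constructor
    · exact Finset.erase_subset_erase _ (Finset.erase_subset_erase _ hts)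
    · rw [Finset.card_erase_of_mem (Finset.mem_erase.2 ⟨hjk.symm, hkt⟩),
        Finset.card_erase_of_mem hjt, htc]
      omega
  · intro u hu
    rw [Finset.mem_coe, Finset.mem_powersetCard] at hu
    obtain ⟨hus, huc⟩ := hu
    have hku : k ∉ u := fun h => Finset.notMem_erase k _ (hus h)
    have hju : j ∉ u := fun h => Finset.notMem_erase j s ((Finset.erase_subset _ _) (hus h))
    have hjku : j ∉ insert k u := by simp [hjk, hju]
    simp only [Finset.mem_coe, mem_filter, Finset.mem_powersetCard]
    refine ⟨⟨?_, ?_⟩, Finset.mem_insert_self _ _, Finset.mem_insert_of_mem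
      (Finset.mem_insert_self _ _)⟩
    · refine Finset.insert_subset hj (Finset.insert_subset hk ?_)
      exact hus.trans ((Finset.erase_subset _ _).trans (Finset.erase_subset _ _))
    · rw [Finset.card_insert_of_notMem hjku, Finset.card_insert_of_notMem hku, huc]
      omega
  · intro t ht
    simp only [Finset.mem_coe, mem_filter] at ht
    obtain ⟨-, hjt, hkt⟩ := ht
    show insert j (insert k ((t.erase j).erase k)) = t
    rw [Finset.insert_erase (Finset.mem_erase.2 ⟨hjk.symm, hkt⟩), Finset.insert_erase hjt]
  · intro u hu
    rw [Finset.mem_coe, Finset.mem_powersetCard] at hu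
    have hku : k ∉ u := fun h => Finset.notMem_erase k _ (hu.1 h)
    have hju : j ∉ u := fun h => Finset.notMem_erase j s ((Finset.erase_subset _ _) (hu.1 h))
    have hjku : j ∉ insert k u := by simp [hjk, hju]
    show ((insert j (insert k u)).erase j).erase k = u
    rw [Finset.erase_insert hjku, Finset.erase_insert hku]

lemma sumA {ι : Type*} [DecidableEq ι] [Fintype ι] (n : ℕ) (hn : 1 ≤ n) (a : ι → ℝ) :
    ∑ t ∈ (univ : Finset ι).powersetCard n, ∑ j ∈ t, a j
      = ((Fintype.card ι - 1).choose (n - 1) : ℝ) * ∑ j, a j := by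
  have h1 : ∀ t : Finset ι, ∑ j ∈ t, a j = ∑ j, if j ∈ t then a j else 0 := by
    intro t
    rw [Finset.sum_ite_mem, Finset.univ_inter]
  simp_rw [h1]
  rw [Finset.sum_comm]
  rw [Finset.mul_sum]
  refine Finset.sum_congr rfl fun j _ => ?_
  simp only [Finset.mem_univ, if_true]
  rw [← Finset.sum_filter, Finset.sum_const, count_mem _ n hn (Finset.mem_univ j),
    Finset.card_univ, nsmul_eq_mul]

lemma sumB {ι : Type*} [DecidableEq ι] [Fintype ι] (n : ℕ) (hn : 2 ≤ n) (x y : ι → ℝ) :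
    ∑ t ∈ (univ : Finset ι).powersetCard n, (∑ j ∈ t, x j) * (∑ k ∈ t, y k)
      = ((Fintype.card ι - 1).choose (n - 1) : ℝ) * ∑ j, x j * y j
        + ((Fintype.card ι - 2).choose (n - 2) : ℝ)
          * ((∑ j, x j) * (∑ j, y j) - ∑ j, x j * y j) := by
  have h1 : ∀ t : Finset ι, (∑ j ∈ t, x j) * (∑ k ∈ t, y k)
      = ∑ j, ∑ k, if j ∈ t ∧ k ∈ t then x j * y k else 0 := by
    intro t
    rw [Finset.sum_mul_sum]
    have hx : ∀ j : ι, ∑ k ∈ t, x j * y k = ∑ k, if k ∈ t then x j * y k else 0 := fun j => by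
      rw [Finset.sum_ite_mem, Finset.univ_inter]
    calc ∑ j ∈ t, ∑ k ∈ t, x j * y k
        = ∑ j, if j ∈ t then ∑ k, if k ∈ t then x j * y k else 0 else 0 := by
          simp_rw [← hx]; rw [Finset.sum_ite_mem, Finset.univ_inter]
      _ = ∑ j, ∑ k, if j ∈ t ∧ k ∈ t then x j * y k else 0 := by
          refine Finset.sum_congr rfl fun j _ => ?_
          by_cases hj : j ∈ t
          · simp [hj]
          · simp [hj]
  have h2 : ∀ j : ι, ∑ t ∈ (univ : Finset ι).powersetCard n,
      ∑ k, (if j ∈ t ∧ k ∈ t then x j * y k else 0)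
      = ∑ k, ((((univ : Finset ι).powersetCard n).filter
          (fun t => j ∈ t ∧ k ∈ t)).card : ℝ) * (x j * y k) := by
    intro j
    rw [Finset.sum_comm]
    refine Finset.sum_congr rfl fun k _ => ?_
    rw [← Finset.sum_filter, Finset.sum_const, nsmul_eq_mul]
  have h3 : ∀ j k : ι, ((((univ : Finset ι).powersetCard n).filter
      (fun t => j ∈ t ∧ k ∈ t)).card : ℝ)
      = if j = k then ((Fintype.card ι - 1).choose (n - 1) : ℝ)
        else ((Fintype.card ι - 2).choose (n - 2) : ℝ) := by
    intro j k
    by_cases hjk : j = k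
    · subst hjk
      simp only [and_self, if_pos rfl, if_true]
      rw [count_mem _ n (by omega) (Finset.mem_univ j), Finset.card_univ]
    · rw [if_neg hjk, count_pair _ n hn (Finset.mem_univ j) (Finset.mem_univ k) hjk,
        Finset.card_univ]
  set C1 := ((Fintype.card ι - 1).choose (n - 1) : ℝ)
  set C2 := ((Fintype.card ι - 2).choose (n - 2) : ℝ)
  have h4 : ∀ j : ι, ∑ k, (if j = k then C1 else C2) * (x j * y k)
      = C2 * (x j * ∑ k, y k) + (C1 - C2) * (x j * y j) := by
    intro j
    have : ∀ k : ι, (if j = k then C1 else C2) * (x j * y k)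
        = C2 * (x j * y k) + (if j = k then (C1 - C2) * (x j * y j) else 0) := by
      intro k
      by_cases hjk : j = k
      · subst hjk; simp; ring
      · simp [hjk]
    simp_rw [this]
    rw [Finset.sum_add_distrib, Finset.sum_ite_eq Finset.univ j
      (fun _ => (C1 - C2) * (x j * y j)), if_pos (Finset.mem_univ j), ← Finset.mul_sum,
      Finset.mul_sum]
    congr 1
    rw [← Finset.mul_sum]
    congr 1
    rw [← Finset.mul_sum]
  calc ∑ t ∈ (univ : Finset ι).powersetCard n, (∑ j ∈ t, x j) * (∑ k ∈ t, y k)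
      = ∑ t ∈ (univ : Finset ι).powersetCard n,
          ∑ j, ∑ k, if j ∈ t ∧ k ∈ t then x j * y k else 0 :=
        Finset.sum_congr rfl fun t _ => h1 t
    _ = ∑ j, ∑ t ∈ (univ : Finset ι).powersetCard n,
          ∑ k, if j ∈ t ∧ k ∈ t then x j * y k else 0 := Finset.sum_comm
    _ = ∑ j, ∑ k, ((((univ : Finset ι).powersetCard n).filter
          (fun t => j ∈ t ∧ k ∈ t)).card : ℝ) * (x j * y k) :=
        Finset.sum_congr rfl fun j _ => h2 j
    _ = ∑ j, ∑ k, (if j = k then C1 else C2) * (x j * y k) := by simp_rw [h3]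
    _ = ∑ j, (C2 * (x j * ∑ k, y k) + (C1 - C2) * (x j * y j)) :=
        Finset.sum_congr rfl fun j _ => h4 j
    _ = C1 * ∑ j, x j * y j + C2 * ((∑ j, x j) * (∑ j, y j) - ∑ j, x j * y j) := by
        rw [Finset.sum_add_distrib, ← Finset.mul_sum, ← Finset.mul_sum, ← Finset.sum_mul]
        ring

lemma integral_comp_S {Ω : Type*} [MeasurableSpace Ω] (μ : Measure Ω) [IsProbabilityMeasure μ]
    {N n : ℕ} (hnN : n ≤ N)
    (S : Ω → Finset (Fin N)) (hSmeas : Measurable S)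
    (hS : ∀ t : Finset (Fin N), t.card = n → μ {ω | S ω = t} = (N.choose n : ℝ≥0∞)⁻¹)
    (h : Finset (Fin N) → ℝ) :
    ∫ ω, h (S ω) ∂μ
      = (∑ t ∈ (univ : Finset (Fin N)).powersetCard n, h t) * ((N.choose n : ℝ))⁻¹ := by
  have hC : (N.choose n : ℝ≥0∞) ≠ 0 := by
    simp [Nat.choose_eq_zero_iff]; omega
  have hC' : (N.choose n : ℝ≥0∞) ≠ ∞ := by simp
  set ν : Measure (Finset (Fin N)) := Measure.map S μ with hν
  haveI : IsProbabilityMeasure ν := Measure.isProbabilityMeasure_map hSmeas.aemeasurable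
  have hsingle : ∀ t : Finset (Fin N), ν {t} = μ {ω | S ω = t} := by
    intro t
    rw [hν, Measure.map_apply hSmeas (measurableSet_singleton t)]
    rfl
  have hfin : ∀ A : Finset (Finset (Fin N)), ν ↑A = ∑ t ∈ A, ν {t} := by
    intro A
    rw [← measure_biUnion_finset ?_ (fun b _ => measurableSet_singleton b)]
    · congr 1
      ext u
      simp
    · intro a _ b _ hab
      simp [Function.onFun, Set.disjoint_singleton, hab]
  set P : Finset (Finset (Fin N)) := (univ : Finset (Fin N)).powersetCard n with hP
  have hPmem : ∀ t : Finset (Fin N), t ∈ P ↔ t.card = n := by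
    intro t; simp [hP, Finset.mem_powersetCard]
  have hPcard : P.card = N.choose n := by
    rw [hP, Finset.card_powersetCard, Finset.card_univ, Fintype.card_fin]
  have hsumP : ∑ t ∈ P, ν {t} = 1 := by
    rw [Finset.sum_congr rfl (fun t ht => by
      rw [hsingle, hS t ((hPmem t).1 ht)]), Finset.sum_const, hPcard, nsmul_eq_mul]
    exact ENNReal.mul_inv_cancel hC hC'
  have hzero : ∀ t : Finset (Fin N), t ∉ P → ν {t} = 0 := by
    intro t ht
    have htotal : ∑ u ∈ (univ : Finset (Finset (Fin N))), ν {u} = 1 := by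
      rw [← hfin]; simp
    have hsplit : ∑ u ∈ (univ : Finset (Finset (Fin N))), ν {u}
        = ∑ u ∈ P, ν {u} + ∑ u ∈ univ \ P, ν {u} := by
      rw [← Finset.sum_union (Finset.disjoint_sdiff)]
      congr 1
      rw [Finset.union_sdiff_of_subset (Finset.subset_univ P)]
    rw [hsplit, hsumP] at htotal
    have hrest : ∑ u ∈ univ \ P, ν {u} = 0 := by
      have h10 : (1 : ℝ≥0∞) + ∑ u ∈ univ \ P, ν {u} = 1 + 0 := htotal.trans (add_zero 1).symm
      exact (ENNReal.add_right_inj (by simp)).mp h10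
    rw [Finset.sum_eq_zero_iff] at hrest
    exact hrest t (by simp [ht])
  have hint : ∫ ω, h (S ω) ∂μ = ∫ t, h t ∂ν := by
    rw [hν, integral_map hSmeas.aemeasurable measurable_from_top.aestronglyMeasurable]
  rw [hint, integral_fintype Integrable.of_finite]
  rw [← Finset.sum_subset (Finset.subset_univ P) (fun t _ ht => by
    rw [Measure.real, hzero t ht]; simp)]
  rw [Finset.sum_mul]
  refine Finset.sum_congr rfl fun t ht => ?_
  rw [Measure.real, hsingle, hS t ((hPmem t).1 ht), smul_eq_mul, mul_comm]
  rw [ENNReal.toReal_inv]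
  simp

lemma memL2_mul_integrable {Ω : Type*} [MeasurableSpace Ω] {μ : Measure Ω} {f g : Ω → ℝ}
    (hf : MemLp f 2 μ) (hg : MemLp g 2 μ) : Integrable (fun ω => f ω * g ω) μ := by
  have h : MemLp (f • g) 1 μ := MemLp.smul hg hf
    (hpqr := ⟨by norm_num [ENNReal.inv_two_add_inv_two]⟩)
  exact memLp_one_iff_integrable.mp h

lemma integral_condCovFn {Ω : Type*} {m : MeasurableSpace Ω} [mΩ : MeasurableSpace Ω]
    (μ : Measure Ω) [IsProbabilityMeasure μ] (hm : m ≤ mΩ)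
    {Tx Ty f g : Ω → ℝ}
    (hf : StronglyMeasurable[m] f) (hg : StronglyMeasurable[m] g)
    (hf2 : MemLp f 2 μ) (hg2 : MemLp g 2 μ) (hTx : MemLp Tx 2 μ) (hTy : MemLp Ty 2 μ)
    (hTxc : μ[Tx|m] =ᵐ[μ] f) (hTyc : μ[Ty|m] =ᵐ[μ] g) :
    ∫ ω, condCovFn m μ Tx Ty ω ∂μ
      = ∫ ω, Tx ω * Ty ω ∂μ - ∫ ω, f ω * g ω ∂μ := by
  have hTxint : Integrable Tx μ := hTx.integrable one_le_two
  have hTyint : Integrable Ty μ := hTy.integrable one_le_two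
  have hTxTy : Integrable (fun ω => Tx ω * Ty ω) μ := memL2_mul_integrable hTx hTy
  have hTxg : Integrable (fun ω => Tx ω * g ω) μ := memL2_mul_integrable hTx hg2
  have hfTy : Integrable (fun ω => f ω * Ty ω) μ := memL2_mul_integrable hf2 hTy
  have hfg : Integrable (fun ω => f ω * g ω) μ := memL2_mul_integrable hf2 hg2
  have hae : (fun ω => (Tx ω - (μ[Tx|m]) ω) * (Ty ω - (μ[Ty|m]) ω))
      =ᵐ[μ] fun ω => (Tx ω - f ω) * (Ty ω - g ω) := by
    filter_upwards [hTxc, hTyc] with ω h1 h2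
    rw [h1, h2]
  -- cross terms
  have crossTx : ∫ ω, Tx ω * g ω ∂μ = ∫ ω, f ω * g ω ∂μ := by
    have hmul : Integrable (g * Tx) μ := by
      have := memL2_mul_integrable hg2 hTx
      exact this
    have h1 : μ[g * Tx|m] =ᵐ[μ] g * μ[Tx|m] :=
      condExp_mul_of_stronglyMeasurable_left hg hmul hTxint
    calc ∫ ω, Tx ω * g ω ∂μ = ∫ ω, (g * Tx) ω ∂μ := by
          refine integral_congr_ae (ae_of_all μ fun ω => ?_)
          simp [mul_comm]
      _ = ∫ ω, (μ[g * Tx|m]) ω ∂μ := (integral_condExp hm).symm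
      _ = ∫ ω, (g * μ[Tx|m]) ω ∂μ := integral_congr_ae h1
      _ = ∫ ω, f ω * g ω ∂μ := by
          refine integral_congr_ae ?_
          filter_upwards [hTxc] with ω h2
          simp only [Pi.mul_apply, h2, mul_comm]
  have crossTy : ∫ ω, f ω * Ty ω ∂μ = ∫ ω, f ω * g ω ∂μ := by
    have hmul : Integrable (f * Ty) μ := by
      have := memL2_mul_integrable hf2 hTy
      exact this
    have h1 : μ[f * Ty|m] =ᵐ[μ] f * μ[Ty|m] :=
      condExp_mul_of_stronglyMeasurable_left hf hmul hTyint
    calc ∫ ω, f ω * Ty ω ∂μ = ∫ ω, (f * Ty) ω ∂μ := rfl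
      _ = ∫ ω, (μ[f * Ty|m]) ω ∂μ := (integral_condExp hm).symm
      _ = ∫ ω, (f * μ[Ty|m]) ω ∂μ := integral_congr_ae h1
      _ = ∫ ω, f ω * g ω ∂μ := by
          refine integral_congr_ae ?_
          filter_upwards [hTyc] with ω h2
          simp only [Pi.mul_apply, h2]
  calc ∫ ω, condCovFn m μ Tx Ty ω ∂μ
      = ∫ ω, (Tx ω - (μ[Tx|m]) ω) * (Ty ω - (μ[Ty|m]) ω) ∂μ := integral_condExp hm
    _ = ∫ ω, (Tx ω - f ω) * (Ty ω - g ω) ∂μ := integral_congr_ae hae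
    _ = ∫ ω, (Tx ω * Ty ω - Tx ω * g ω - f ω * Ty ω + f ω * g ω) ∂μ := by
        refine integral_congr_ae (ae_of_all μ fun ω => ?_)
        ring
    _ = ∫ ω, Tx ω * Ty ω ∂μ - ∫ ω, Tx ω * g ω ∂μ - ∫ ω, f ω * Ty ω ∂μ
          + ∫ ω, f ω * g ω ∂μ := by
        rw [integral_add (f := fun ω => Tx ω * Ty ω - Tx ω * g ω - f ω * Ty ω)
            (g := fun ω => f ω * g ω) ((hTxTy.sub hTxg).sub hfTy) hfg,
          integral_sub (f := fun ω => Tx ω * Ty ω - Tx ω * g ω)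
            (g := fun ω => f ω * Ty ω) (hTxTy.sub hTxg) hfTy,
          integral_sub (f := fun ω => Tx ω * Ty ω)
            (g := fun ω => Tx ω * g ω) hTxTy hTxg]
    _ = ∫ ω, Tx ω * Ty ω ∂μ - ∫ ω, f ω * g ω ∂μ := by
        rw [crossTx, crossTy]
        ring


/-- **Bias of the plug-in covariance estimator.**
Let `S` be a SRSWOR of size `n` (`2 ≤ n ≤ N`) from a population of `N ≥ 2` units and
let `T_x, T_y, T_{xy}` be square-integrable with `E[T_x | S] = ∑_{j∈S} x_j`,
`E[T_y | S] = ∑_{j∈S} y_j`, `E[T_{xy} | S] = ∑_{j∈S} x_j y_j`.  Then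
`Ŝ_{xy} = (1/(n−1)) (T_{xy} − T_x T_y/n)` satisfies
`E[Ŝ_{xy}] = S_{xy} − (1/(n(n−1))) E[Cov(T_x, T_y | S)]`. -/
theorem plug_in_covariance_estimator_expectation
    {Ω : Type*} [MeasurableSpace Ω] (μ : Measure Ω) [IsProbabilityMeasure μ]
    (N n : ℕ) (hN : 2 ≤ N) (hn : 2 ≤ n) (hnN : n ≤ N)
    (x y : Fin N → ℝ)
    (S : Ω → Finset (Fin N)) (hSmeas : Measurable S)
    (hS : ∀ t : Finset (Fin N), t.card = n →
      μ {ω | S ω = t} = (N.choose n : ℝ≥0∞)⁻¹)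
    (Tx Ty Txy : Ω → ℝ)
    (hTx : MemLp Tx 2 μ) (hTy : MemLp Ty 2 μ) (hTxy : MemLp Txy 2 μ)
    (hTxunb : μ[Tx | MeasurableSpace.comap S ⊤] =ᵐ[μ] fun ω => ∑ j ∈ S ω, x j)
    (hTyunb : μ[Ty | MeasurableSpace.comap S ⊤] =ᵐ[μ] fun ω => ∑ j ∈ S ω, y j)
    (hTxyunb : μ[Txy | MeasurableSpace.comap S ⊤] =ᵐ[μ] fun ω => ∑ j ∈ S ω, x j * y j) :
    ∫ ω, (Txy ω - Tx ω * Ty ω / (n : ℝ)) / ((n : ℝ) - 1) ∂μ =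
      (∑ j, (x j - (∑ i, x i) / (N : ℝ)) * (y j - (∑ i, y i) / (N : ℝ))) /
          ((N : ℝ) - 1) -
        (1 / ((n : ℝ) * ((n : ℝ) - 1))) *
          ∫ ω, condCovFn (MeasurableSpace.comap S ⊤) μ Tx Ty ω ∂μ := by
  have hm : MeasurableSpace.comap S ⊤ ≤ ‹MeasurableSpace Ω› := hSmeas.comap_le
  haveI : SigmaFinite (μ.trim hm) := inferInstance
  -- strong measurability of compositions w.r.t. the comap σ-algebra
  have hcomp_meas : ∀ H : Finset (Fin N) → ℝ,
      StronglyMeasurable[MeasurableSpace.comap S ⊤] (fun ω => H (S ω)) := by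
    intro H
    have h : @Measurable Ω ℝ (MeasurableSpace.comap S ⊤) _ (fun ω => H (S ω)) :=
      fun A _ => ⟨H ⁻¹' A, trivial, rfl⟩
    exact h.stronglyMeasurable
  have hcomp_L2 : ∀ H : Finset (Fin N) → ℝ, MemLp (fun ω => H (S ω)) 2 μ := by
    intro H
    refine MemLp.of_bound (((hcomp_meas H).mono hm).aestronglyMeasurable)
      (∑ t : Finset (Fin N), |H t|) (ae_of_all μ fun ω => ?_)
    calc ‖H (S ω)‖ = |H (S ω)| := rfl
      _ ≤ ∑ t : Finset (Fin N), |H t| :=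
          Finset.single_le_sum (fun t _ => abs_nonneg (H t)) (Finset.mem_univ (S ω))
  -- notation for population quantities
  set A : ℝ := ∑ j, x j * y j with hA_def
  set X : ℝ := ∑ j, x j with hX_def
  set Y : ℝ := ∑ j, y j with hY_def
  set C : ℝ := (N.choose n : ℝ) with hC_def
  set C1 : ℝ := ((N - 1).choose (n - 1) : ℝ) with hC1_def
  set C2 : ℝ := ((N - 2).choose (n - 2) : ℝ) with hC2_def
  set V : ℝ := ∫ ω, condCovFn (MeasurableSpace.comap S ⊤) μ Tx Ty ω ∂μ with hV_def
  -- Step 1 : ∫ Txy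
  have step1 : ∫ ω, Txy ω ∂μ
      = ∫ ω, (fun t => ∑ j ∈ t, x j * y j) (S ω) ∂μ := by
    rw [← integral_condExp hm (f := Txy)]
    exact integral_congr_ae hTxyunb
  -- Step 2 : conditional covariance
  have step2 : V = ∫ ω, Tx ω * Ty ω ∂μ
      - ∫ ω, (fun t => (∑ j ∈ t, x j) * (∑ j ∈ t, y j)) (S ω) ∂μ := by
    rw [hV_def]
    exact integral_condCovFn μ hm
      (hcomp_meas (fun t => ∑ j ∈ t, x j)) (hcomp_meas (fun t => ∑ j ∈ t, y j))
      (hcomp_L2 (fun t => ∑ j ∈ t, x j)) (hcomp_L2 (fun t => ∑ j ∈ t, y j))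
      hTx hTy hTxunb hTyunb
  -- Step 3 : evaluate the discrete integrals
  have hNfin : Fintype.card (Fin N) = N := Fintype.card_fin N
  have E1 : ∫ ω, (fun t => ∑ j ∈ t, x j * y j) (S ω) ∂μ = (C1 * A) * C⁻¹ := by
    rw [integral_comp_S μ hnN S hSmeas hS (fun t => ∑ j ∈ t, x j * y j)]
    congr 1
    rw [sumA n (by omega) (fun j => x j * y j), hNfin]
  have E2 : ∫ ω, (fun t => (∑ j ∈ t, x j) * (∑ j ∈ t, y j)) (S ω) ∂μ
      = (C1 * A + C2 * (X * Y - A)) * C⁻¹ := by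
    rw [integral_comp_S μ hnN S hSmeas hS (fun t => (∑ j ∈ t, x j) * (∑ j ∈ t, y j))]
    congr 1
    rw [sumB n hn x y, hNfin]
  -- nonzero facts
  have hnR : (n : ℝ) ≠ 0 := by positivity
  have hn1R : (n : ℝ) - 1 ≠ 0 := by
    have : (2 : ℝ) ≤ (n : ℝ) := by exact_mod_cast hn
    linarith
  have hNR : (N : ℝ) ≠ 0 := by positivity
  have hN1R : (N : ℝ) - 1 ≠ 0 := by
    have : (2 : ℝ) ≤ (N : ℝ) := by exact_mod_cast hN
    linarith
  -- Step 4 : decompose the left-hand side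
  have hTxyint : Integrable Txy μ := hTxy.integrable one_le_two
  have hTxTy : Integrable (fun ω => Tx ω * Ty ω) μ := memL2_mul_integrable hTx hTy
  have decomp : ∫ ω, (Txy ω - Tx ω * Ty ω / (n : ℝ)) / ((n : ℝ) - 1) ∂μ
      = (∫ ω, Txy ω ∂μ) * ((n : ℝ) - 1)⁻¹
        - (∫ ω, Tx ω * Ty ω ∂μ) * ((n : ℝ)⁻¹ * ((n : ℝ) - 1)⁻¹) := by
    have hpt : ∀ ω, (Txy ω - Tx ω * Ty ω / (n : ℝ)) / ((n : ℝ) - 1)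
        = Txy ω * ((n : ℝ) - 1)⁻¹ - Tx ω * Ty ω * ((n : ℝ)⁻¹ * ((n : ℝ) - 1)⁻¹) := by
      intro ω
      field_simp
    simp_rw [hpt]
    rw [integral_sub (hTxyint.mul_const _) (hTxTy.mul_const _),
      integral_mul_const, integral_mul_const]
  have hC1pos : 0 < C1 := by
    rw [hC1_def]
    exact_mod_cast Nat.choose_pos (by omega : n - 1 ≤ N - 1)
  -- binomial identities
  have hCC1 : (N : ℝ) * C1 = C * (n : ℝ) := by
    have h := Nat.add_one_mul_choose_eq (N - 1) (n - 1)
    have e1 : N - 1 + 1 = N := by omega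
    have e2 : n - 1 + 1 = n := by omega
    simp only [Nat.succ_eq_add_one, e1, e2] at h
    rw [hC1_def, hC_def]
    exact_mod_cast h
  have hC1C2 : ((N : ℝ) - 1) * C2 = C1 * ((n : ℝ) - 1) := by
    have h := Nat.add_one_mul_choose_eq (N - 2) (n - 2)
    have e1 : N - 2 + 1 = N - 1 := by omega
    have e2 : n - 2 + 1 = n - 1 := by omega
    simp only [Nat.succ_eq_add_one, e1, e2] at h
    rw [hC1_def, hC2_def]
    have h1 : ((N - 1 : ℕ) : ℝ) = (N : ℝ) - 1 := by
      push_cast [Nat.cast_sub (by omega : 1 ≤ N)]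
      ring
    have h2 : ((n - 1 : ℕ) : ℝ) = (n : ℝ) - 1 := by
      push_cast [Nat.cast_sub (by omega : 1 ≤ n)]
      ring
    calc ((N : ℝ) - 1) * ((N - 2).choose (n - 2) : ℝ)
        = (((N - 1) * (N - 2).choose (n - 2) : ℕ) : ℝ) := by
          push_cast [h1]
          ring
      _ = (((N - 1).choose (n - 1) * (n - 1) : ℕ) : ℝ) := by
          exact_mod_cast congrArg (Nat.cast : ℕ → ℝ) h
      _ = ((N - 1).choose (n - 1) : ℝ) * ((n : ℝ) - 1) := by
          push_cast [h2]
          ring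
  -- population covariance identity
  have hA' : ∑ j, (x j - X / (N : ℝ)) * (y j - Y / (N : ℝ)) = A - X * Y / (N : ℝ) := by
    have hexp : ∀ j : Fin N, (x j - X / (N : ℝ)) * (y j - Y / (N : ℝ))
        = x j * y j - x j * (Y / (N : ℝ)) - (X / (N : ℝ)) * y j
          + (X / (N : ℝ)) * (Y / (N : ℝ)) := fun j => by ring
    simp_rw [hexp]
    rw [Finset.sum_add_distrib, Finset.sum_sub_distrib, Finset.sum_sub_distrib,
      ← Finset.sum_mul, ← Finset.mul_sum, Finset.sum_const, Finset.card_univ, hNfin,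
      nsmul_eq_mul, ← hA_def, ← hX_def, ← hY_def]
    field_simp
    ring
  -- final assembly
  rw [decomp, step1, E1, hA']
  have hTxTyval : ∫ ω, Tx ω * Ty ω ∂μ = V + (C1 * A + C2 * (X * Y - A)) * C⁻¹ := by
    rw [step2, E2]
    ring
  rw [hTxTyval]
  have hCval : C = (N : ℝ) * C1 / (n : ℝ) := by
    field_simp
    linarith [hCC1]
  have hC2val : C2 = C1 * ((n : ℝ) - 1) / ((N : ℝ) - 1) := by
    field_simp
    linarith [hC1C2]
  rw [hCval, hC2val]
  have hC1ne : C1 ≠ 0 := ne_of_gt hC1pos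
  field_simp
  ring
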